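/- Let (D, F, V) be a Dieudonné module that is free of rank 4 over W, let D' = D₀ ⊕ D₀ with F' = F₀ ⊕ F₀ and V' = V₀ ⊕ V₀, and write e₁' = (e,0), f₁' = (f,0), e₂' = (0,e), f₂' = (0,f). Suppose φ : D → D' is an isogeny of Dieudonné modules. Then there exist x ∈ W and a W-basis {e₁, f₁, e₂, f₂} of D such that F(e₁) = f₁, F(f₁) = pe₁, F(e₂) = f₂, F(f₂) = pe₂ + xf₁, V(e₁) = f₁, V(f₁) = pe₁, V(e₂) = f₂ − σ⁻¹(x)e₁, V(f₂) = pe₂, and such that φ(We₁ + Wf₁) ⊆ We₁' + Wf₁'. -/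

import Mathlib

noncomputable section

open Pointwise

/-- `k`, an algebraic closure of the field `𝔽_p` with `p` elements. -/
abbrev Kbar (p : ℕ) [Fact p.Prime] : Type _ := AlgebraicClosure (ZMod p)

/-- `W = W(k)`, the ring of Witt vectors with coefficients in `k`. -/
abbrev Wt (p : ℕ) [Fact p.Prime] : Type _ := WittVector p (Kbar p)

/-- `σ : W → W`, the Witt vector Frobenius automorphism, lifting the `p`-th power map on `k`. -/
def σW (p : ℕ) [Fact p.Prime] : Wt p ≃+* Wt p := WittVector.frobeniusEquiv p (Kbar p)

/-- The Dieudonné module `D₀`, free of rank 2 over `W` with basis `e = (1,0)`, `f = (0,1)`. -/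
abbrev D0 (p : ℕ) [Fact p.Prime] : Type _ := Wt p × Wt p

/-- The Frobenius `F₀` of `D₀`: `F₀ e = f`, `F₀ f = p e`, extended `σ`-semilinearly. -/
def F0 (p : ℕ) [Fact p.Prime] : D0 p → D0 p :=
  fun m => ((p : Wt p) * σW p m.2, σW p m.1)

/-- The Verschiebung `V₀` of `D₀`: `V₀ e = f`, `V₀ f = p e`, extended `σ⁻¹`-semilinearly. -/
def V0 (p : ℕ) [Fact p.Prime] : D0 p → D0 p :=
  fun m => ((p : Wt p) * (σW p).symm m.2, (σW p).symm m.1)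

/-- `D' = D₀ ⊕ D₀`. -/
abbrev D2 (p : ℕ) [Fact p.Prime] : Type _ := D0 p × D0 p

/-- `F' = F₀ ⊕ F₀`. -/
def F2 (p : ℕ) [Fact p.Prime] : D2 p → D2 p := fun m => (F0 p m.1, F0 p m.2)

/-- `V' = V₀ ⊕ V₀`. -/
def V2 (p : ℕ) [Fact p.Prime] : D2 p → D2 p := fun m => (V0 p m.1, V0 p m.2)

namespace St2
variable (p : ℕ) [Fact p.Prime]

lemma coeff_init (x : Wt p) (n i : ℕ) :
    (WittVector.init n x).coeff i = if i < n then x.coeff i else 0 := by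
  show (WittVector.select _ x).coeff i = _
  simp [WittVector.select, WittVector.coeff_mk]

lemma init_eq_iff (x y : Wt p) (n : ℕ) :
    WittVector.init n x = WittVector.init n y ↔ ∀ i < n, x.coeff i = y.coeff i := by
  constructor
  · intro h i hi
    have := congrArg (fun z => WittVector.coeff z i) h
    simpa [coeff_init, hi] using this
  · intro h
    apply WittVector.ext
    intro i
    rw [coeff_init, coeff_init]
    split_ifs with hi
    · exact h i hi
    · rfl

lemma coeff_zero_mul_p_pow (x : Wt p) (m : ℕ) {i : ℕ} (hi : i < m) :
    (x * (p : Wt p) ^ m).coeff i = 0 := by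
  induction m generalizing i with
  | zero => omega
  | succ m ih =>
    have : x * (p : Wt p) ^ (m+1) = (x * (p:Wt p)^m) * p := by ring
    rw [this]
    rcases i with _ | i
    · exact WittVector.mul_charP_coeff_zero _
    · rw [WittVector.mul_charP_coeff_succ]
      rw [ih (by omega)]
      exact zero_pow (Fact.out (p := p.Prime)).ne_zero

lemma coeff_top_mul_p_pow (x : Wt p) (m : ℕ) :
    (x * (p : Wt p) ^ m).coeff m = x.coeff 0 ^ p ^ m := by
  induction m with
  | zero => simp
  | succ m ih =>
    have : x * (p : Wt p) ^ (m+1) = (x * (p:Wt p)^m) * p := by ring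
    rw [this, WittVector.mul_charP_coeff_succ, ih, ← pow_mul, pow_succ]

lemma p_pow_dvd_iff (x : Wt p) (n : ℕ) :
    (p : Wt p) ^ n ∣ x ↔ ∀ i < n, x.coeff i = 0 := by
  constructor
  · rintro ⟨z, rfl⟩ i hi
    rw [mul_comm]
    exact coeff_zero_mul_p_pow p z n hi
  · intro h
    by_cases hx : x = 0
    · simp [hx]
    · obtain ⟨m, b, hb0, rfl⟩ := WittVector.exists_eq_pow_p_mul x hx
      have hmn : n ≤ m := by
        by_contra hmn
        push_neg at hmn
        have := h m hmn
        rw [mul_comm] at this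
        rw [coeff_top_mul_p_pow] at this
        exact hb0 (pow_eq_zero_iff (pow_ne_zero _ (Fact.out (p := p.Prime)).ne_zero) |>.mp this)
      exact Dvd.dvd.mul_right (pow_dvd_pow _ hmn) b

lemma p_dvd_iff (x : Wt p) : (p : Wt p) ∣ x ↔ x.coeff 0 = 0 := by
  have := p_pow_dvd_iff p x 1
  simpa using this

lemma isUnit_iff (x : Wt p) : IsUnit x ↔ x.coeff 0 ≠ 0 := by
  constructor
  · intro h h0
    obtain ⟨z, hz⟩ := (p_dvd_iff p x).mpr h0
    have : IsUnit (p : Wt p) := isUnit_of_mul_isUnit_left (hz ▸ h)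
    exact (WittVector.irreducible (p := p)).not_isUnit this
  · exact WittVector.isUnit_of_coeff_zero_ne_zero x

lemma isUnit_or_dvd (x : Wt p) : IsUnit x ∨ (p : Wt p) ∣ x := by
  by_cases h : x.coeff 0 = 0
  · exact Or.inr ((p_dvd_iff p x).mpr h)
  · exact Or.inl ((isUnit_iff p x).mpr h)

lemma prime_p : Prime (p : Wt p) := by
  refine ⟨WittVector.p_nonzero p _, (WittVector.irreducible (p := p)).not_isUnit, ?_⟩
  intro a b hab
  rw [p_dvd_iff] at hab ⊢
  rw [p_dvd_iff p b]
  have : (a*b).coeff 0 = a.coeff 0 * b.coeff 0 := by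
    exact WittVector.mul_coeff_zero a b
  rw [this] at hab
  exact mul_eq_zero.mp hab

lemma eq_zero_of_forall (x : Wt p) (h : ∀ n, (p : Wt p)^n ∣ x) : x = 0 := by
  apply WittVector.ext
  intro i
  have := (p_pow_dvd_iff p x (i+1)).mp (h (i+1)) i (by omega)
  simp [this]

lemma sigma_coeff_zero (x : Wt p) : (σW p x).coeff 0 = x.coeff 0 ^ p := by
  show (WittVector.frobenius x).coeff 0 = _
  exact WittVector.coeff_frobenius_charP (p := p) x 0

end St2

namespace St2
variable (p : ℕ) [Fact p.Prime]

lemma exists_root_AS (c : Kbar p) : ∃ lam : Kbar p, lam ^ (p ^ 2) - lam + c = 0 := by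
  have hp1 : 1 < p := (Fact.out (p := p.Prime)).one_lt
  have hp2 : 1 < p ^ 2 := by nlinarith
  set g : Polynomial (Kbar p) := - Polynomial.X + Polynomial.C c with hg
  set f : Polynomial (Kbar p) := Polynomial.X ^ (p^2) + g with hf
  have hd2 : g.degree < (Polynomial.X ^ (p^2) : Polynomial (Kbar p)).degree := by
    rw [Polynomial.degree_X_pow]
    refine lt_of_le_of_lt (Polynomial.degree_add_le _ _) ?_
    rw [Polynomial.degree_neg, Polynomial.degree_X]
    refine max_lt ?_ (lt_of_le_of_lt Polynomial.degree_C_le ?_)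
    · exact_mod_cast hp2
    · exact_mod_cast Nat.lt_of_lt_of_le Nat.zero_lt_one hp2.le
  have hdeg : f.degree = (p^2 : ℕ) := by
    rw [hf, Polynomial.degree_add_eq_left_of_degree_lt hd2, Polynomial.degree_X_pow]
  obtain ⟨lam, hroot⟩ := IsAlgClosed.exists_root f (by rw [hdeg]; exact_mod_cast (Nat.lt_of_lt_of_le Nat.zero_lt_one hp2.le).ne')
  refine ⟨lam, ?_⟩
  have := Polynomial.IsRoot.eq_zero hroot
  rw [hf, hg] at this
  simp only [Polynomial.eval_add, Polynomial.eval_pow, Polynomial.eval_X, Polynomial.eval_neg,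
    Polynomial.eval_C] at this
  linear_combination this
end St2

namespace St2
variable (p : ℕ) [Fact p.Prime]


lemma sigma_pdvd (x : Wt p) (n : ℕ) (h : (p : Wt p)^n ∣ x) : (p : Wt p)^n ∣ σW p x := by
  obtain ⟨y, rfl⟩ := h
  refine ⟨σW p y, ?_⟩
  rw [map_mul, map_pow, map_natCast]

lemma step (d : Wt p) : ∃ t : Wt p, (p : Wt p) ∣ (d - (t - σW p (σW p t))) := by
  obtain ⟨lam, hlam⟩ := exists_root_AS p (d.coeff 0)
  refine ⟨WittVector.mk p (fun n => if n = 0 then lam else 0), ?_⟩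
  set t : Wt p := WittVector.mk p (fun n => if n = 0 then lam else 0) with ht
  have ht0 : t.coeff 0 = lam := by rw [ht, WittVector.coeff_mk]; simp
  have h1 : (d - (t - σW p (σW p t))).coeff 0 = 0 := by
    have e1 : (d - (t - σW p (σW p t))).coeff 0
        = d.coeff 0 - ((t - σW p (σW p t)).coeff 0) :=
      map_sub (WittVector.constantCoeff : Wt p →+* Kbar p) d _
    have e2 : (t - σW p (σW p t)).coeff 0 = t.coeff 0 - (σW p (σW p t)).coeff 0 :=
      map_sub (WittVector.constantCoeff : Wt p →+* Kbar p) t _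
    rw [e1, e2, sigma_coeff_zero, sigma_coeff_zero, ht0, ← pow_mul, ← pow_two]
    linear_combination hlam
  have := (p_pow_dvd_iff p (d - (t - σW p (σW p t))) 1).mpr (by intro i hi; interval_cases i; exact h1)
  simpa using this

/-- property: s approximates a solution of s - σ²s = c to order n -/
def P (c : Wt p) (n : ℕ) (s : Wt p) : Prop := (p : Wt p)^n ∣ (c - (s - σW p (σW p s)))

lemma step' (c : Wt p) (n : ℕ) (s : Wt p) (hs : P p c n s) :
    ∃ t : Wt p, P p c (n+1) (s + (p:Wt p)^n * t) := by
  obtain ⟨d, hd⟩ := hs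
  obtain ⟨t, ht⟩ := step p d
  refine ⟨t, ?_⟩
  obtain ⟨u, hu⟩ := ht
  refine ⟨u, ?_⟩
  have hσ : σW p (σW p (s + (p:Wt p)^n * t))
      = σW p (σW p s) + (p:Wt p)^n * σW p (σW p t) := by
    rw [map_add, map_add, map_mul, map_mul, map_pow, map_pow, map_natCast, map_natCast]
  rw [hσ]
  have : c - (s + (p:Wt p)^n * t - (σW p (σW p s) + (p:Wt p)^n * σW p (σW p t)))
      = (c - (s - σW p (σW p s))) - (p:Wt p)^n * (t - σW p (σW p t)) := by ring
  rw [this, hd]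
  rw [pow_succ]
  linear_combination ((p:Wt p)^n) * hu

/-- the approximating sequence -/
def seq (c : Wt p) : (n : ℕ) → {s : Wt p // P p c n s}
  | 0 => ⟨0, by simp [P]⟩
  | n+1 => ⟨(seq c n).1 + (p:Wt p)^n * (step' p c n (seq c n).1 (seq c n).2).choose,
      (step' p c n (seq c n).1 (seq c n).2).choose_spec⟩

lemma seq_coeff_stable (c : Wt p) (n : ℕ) {i : ℕ} (hi : i < n) :
    ∀ m, n ≤ m → ((seq p c m).1).coeff i = ((seq p c n).1).coeff i := by
  intro m hm
  induction m with
  | zero => omega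
  | succ m ih =>
    rcases Nat.lt_or_ge m n with h | h
    · have : n = m + 1 := by omega
      rw [this]
    · have hstep : ((seq p c (m+1)).1).coeff i = ((seq p c m).1).coeff i := by
        show ((seq p c m).1 + (p:Wt p)^m * _).coeff i = _
        set t := (step' p c m (seq p c m).1 (seq p c m).2).choose
        have h1 : WittVector.init (m) ((seq p c m).1 + (p:Wt p)^m * t)
            = WittVector.init m (WittVector.init m (seq p c m).1
              + WittVector.init m ((p:Wt p)^m * t)) := WittVector.init_add _ _ _
        have h2 : WittVector.init m ((p:Wt p)^m * t) = 0 := by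
          apply WittVector.ext
          intro j
          rw [coeff_init]
          split_ifs with hj
          · have : (p:Wt p)^m ∣ (p:Wt p)^m * t := ⟨t, rfl⟩
            rw [(p_pow_dvd_iff p _ m).mp this j hj]
            simp
          · simp
        have h3 : WittVector.init m ((seq p c m).1 + (p:Wt p)^m * t)
            = WittVector.init m ((seq p c m).1) := by
          rw [h1, h2, add_zero, WittVector.init_init]
        have := congrArg (fun z => WittVector.coeff z i) h3
        simpa [coeff_init, Nat.lt_of_lt_of_le hi h] using this
      rw [hstep, ih h]

lemma surj_one_sub_sigma_sq (c : Wt p) : ∃ s : Wt p, s - σW p (σW p s) = c := by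
  set s : Wt p := WittVector.mk p (fun i => ((seq p c (i+1)).1).coeff i) with hs
  have hcoeff : ∀ n, ∀ i < n, s.coeff i = ((seq p c n).1).coeff i := by
    intro n i hi
    rw [hs, WittVector.coeff_mk]
    exact (seq_coeff_stable p c (i+1) (by omega) n hi).symm
  have hdvd : ∀ n, (p:Wt p)^n ∣ (s - (seq p c n).1) := by
    intro n
    rw [p_pow_dvd_iff]
    intro i hi
    have h3 : WittVector.init n (s - (seq p c n).1)
        = WittVector.init n (WittVector.init n s - WittVector.init n (seq p c n).1) :=
      WittVector.init_sub _ _ _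
    have h4 : WittVector.init n s = WittVector.init n (seq p c n).1 := by
      apply WittVector.ext
      intro j
      rw [coeff_init, coeff_init]
      split_ifs with hj
      · exact hcoeff n j hj
      · rfl
    rw [h4, sub_self] at h3
    have := congrArg (fun z => WittVector.coeff z i) h3
    simpa [coeff_init, hi] using this
  refine ⟨s, ?_⟩
  have key : ∀ n, (p:Wt p)^n ∣ (c - (s - σW p (σW p s))) := by
    intro n
    obtain ⟨u, hu⟩ := hdvd n
    have h5 : c - (s - σW p (σW p s))
        = (c - ((seq p c n).1 - σW p (σW p (seq p c n).1)))
          - ((s - (seq p c n).1) - σW p (σW p (s - (seq p c n).1))) := by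
      rw [map_sub, map_sub]; ring
    rw [h5]
    apply dvd_sub
    · exact (seq p c n).2
    · apply dvd_sub
      · exact hdvd n
      · exact sigma_pdvd p _ n (sigma_pdvd p _ n (hdvd n))
  have := eq_zero_of_forall p _ key
  linear_combination -this

end St2

namespace St2
variable (p : ℕ) [Fact p.Prime]


example : IsDomain (Wt p) := inferInstance

lemma sigma_p : σW p (p : Wt p) = (p : Wt p) := map_natCast _ p
lemma sigma_symm_p : (σW p).symm (p : Wt p) = (p : Wt p) := map_natCast _ p

lemma sigma_dvd {x : Wt p} (h : (p:Wt p) ∣ σW p x) : (p:Wt p) ∣ x := by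
  obtain ⟨y, hy⟩ := h
  refine ⟨(σW p).symm y, ?_⟩
  have := congrArg (σW p).symm hy
  rw [(σW p).symm_apply_apply, map_mul, sigma_symm_p] at this
  exact this

lemma F0_smul (a : Wt p) (m : D0 p) : F0 p (a • m) = σW p a • F0 p m := by
  simp only [F0, Prod.smul_def, smul_eq_mul, Prod.mk.injEq, map_mul]
  constructor
  · ring
  · trivial

lemma V0_smul (a : Wt p) (m : D0 p) : V0 p (a • m) = (σW p).symm a • V0 p m := by
  simp only [V0, Prod.smul_def, smul_eq_mul, Prod.mk.injEq, map_mul]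
  constructor
  · ring
  · trivial

/-- determinant is a unit when first coordinate is a unit -/
lemma det_unit_A {a1 a2 : Wt p} (h : IsUnit a1) :
    IsUnit (a1 * σW p a1 - (p:Wt p) * σW p a2 * a2) := by
  rcases isUnit_or_dvd p (a1 * σW p a1 - (p:Wt p) * σW p a2 * a2) with h1 | h1
  · exact h1
  · exfalso
    have h2 : (p:Wt p) ∣ a1 * σW p a1 := by
      have : (p:Wt p) ∣ (p:Wt p) * σW p a2 * a2 := ⟨σW p a2 * a2, by ring⟩
      have := dvd_add h1 this
      simpa using this
    rcases (prime_p p).2.2 _ _ h2 with h3 | h3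
    · obtain ⟨y, hy⟩ := h3
      rw [hy] at h
      exact (prime_p p).2.1 (isUnit_of_mul_isUnit_left h)
    · have := sigma_dvd p h3
      obtain ⟨y, hy⟩ := this
      rw [hy] at h
      exact (prime_p p).2.1 (isUnit_of_mul_isUnit_left h)

end St2

namespace St2
variable (p : ℕ) [Fact p.Prime]

lemma caseA (L : Submodule (Wt p) (D0 p)) (hF : ∀ m ∈ L, F0 p m ∈ L)
    (a : D0 p) (ha : a ∈ L) (h1 : IsUnit a.1) : L = ⊤ := by
  set w := a.1 * σW p a.1 - (p:Wt p) * σW p a.2 * a.2 with hw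
  have hwu : IsUnit w := det_unit_A p h1
  obtain ⟨wu, hwu'⟩ := hwu
  have hFa : F0 p a ∈ L := hF a ha
  have he : ((w, 0) : D0 p) ∈ L := by
    have : ((w, 0) : D0 p) = σW p a.1 • a - a.2 • F0 p a := by
      simp only [F0, Prod.smul_def, smul_eq_mul, Prod.mk_sub_mk, Prod.mk.injEq, hw]
      constructor <;> ring
    rw [this]
    exact sub_mem (L.smul_mem _ ha) (L.smul_mem _ hFa)
  have hf : ((0, w) : D0 p) ∈ L := by
    have : ((0, w) : D0 p) = a.1 • F0 p a - ((p:Wt p) * σW p a.2) • a := by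
      simp only [F0, Prod.smul_def, smul_eq_mul, Prod.mk_sub_mk, Prod.mk.injEq, hw]
      constructor
      · ring
      · trivial
    rw [this]
    exact sub_mem (L.smul_mem _ hFa) (L.smul_mem _ ha)
  rw [eq_top_iff]
  rintro ⟨x, y⟩ -
  have : ((x, y) : D0 p) = (x * ↑wu⁻¹) • ((w,0) : D0 p) + (y * ↑wu⁻¹) • ((0,w) : D0 p) := by
    have hx : ∀ z : Wt p, z * ↑wu⁻¹ * w = z := by
      intro z
      rw [← hwu', mul_assoc, Units.inv_mul, mul_one]
    simp only [Prod.smul_def, smul_eq_mul, Prod.mk_add_mk, Prod.mk.injEq, mul_zero,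
      add_zero, zero_add, hx]
  rw [this]
  exact add_mem (L.smul_mem _ he) (L.smul_mem _ hf)

end St2

namespace St2
variable (p : ℕ) [Fact p.Prime]

lemma caseB (L : Submodule (Wt p) (D0 p)) (hF : ∀ m ∈ L, F0 p m ∈ L)
    (hA : ∀ m ∈ L, ¬ IsUnit (m.1 : Wt p))
    (a : D0 p) (ha : a ∈ L) (h2 : IsUnit a.2) :
    L = Submodule.span (Wt p) {((0:Wt p),(1:Wt p)), ((p:Wt p),(0:Wt p))} := by
  obtain ⟨a1', ha1⟩ := (isUnit_or_dvd p a.1).resolve_left (hA a ha)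
  have hσa1 : σW p a.1 = (p:Wt p) * σW p a1' := by rw [ha1, map_mul, sigma_p]
  obtain ⟨wu, hwu'⟩ := det_unit_A p (a2 := a1') h2
  have h1 : (↑wu⁻¹ : Wt p) * (a.2 * σW p a.2 - (p:Wt p) * σW p a1' * a1') = 1 := by
    rw [← hwu']; exact Units.inv_mul wu
  have hFa : F0 p a ∈ L := hF a ha
  have hfmem : (((0:Wt p),(1:Wt p)) : D0 p) ∈ L := by
    have : (((0:Wt p),(1:Wt p)) : D0 p)
        = ((↑wu⁻¹ : Wt p) * σW p a.2) • a + (-((↑wu⁻¹ : Wt p) * a1')) • F0 p a := by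
      simp only [F0, Prod.smul_def, smul_eq_mul, Prod.mk_add_mk, Prod.mk.injEq, hσa1]
      constructor
      · rw [ha1]; ring
      · linear_combination -h1
    rw [this]
    exact add_mem (L.smul_mem _ ha) (L.smul_mem _ hFa)
  have hvmem : (((p:Wt p),(0:Wt p)) : D0 p) ∈ L := by
    have : (((p:Wt p),(0:Wt p)) : D0 p)
        = (-((↑wu⁻¹ : Wt p) * (p:Wt p) * σW p a1')) • a + ((↑wu⁻¹ : Wt p) * a.2) • F0 p a := by
      simp only [F0, Prod.smul_def, smul_eq_mul, Prod.mk_add_mk, Prod.mk.injEq, hσa1]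
      constructor
      · rw [ha1]; linear_combination -(p:Wt p) * h1
      · ring
    rw [this]
    exact add_mem (L.smul_mem _ ha) (L.smul_mem _ hFa)
  apply le_antisymm
  · intro m hm
    obtain ⟨x, hx⟩ := (isUnit_or_dvd p m.1).resolve_left (hA m hm)
    rw [Submodule.mem_span_pair]
    refine ⟨m.2, x, ?_⟩
    simp only [Prod.smul_def, smul_eq_mul, Prod.mk_add_mk, mul_zero, mul_one, zero_add, add_zero]
    rw [Prod.ext_iff]
    constructor
    · simp [hx, mul_comm]
    · simp
  · rw [Submodule.span_le]
    rintro m hm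
    rcases hm with h | h
    · rw [h]; exact hfmem
    · rw [Set.mem_singleton_iff] at h; rw [h]; exact hvmem

end St2

namespace St2
variable (p : ℕ) [Fact p.Prime]

def Concl (L : Submodule (Wt p) (D0 p)) : Prop :=
  ∃ u v : D0 p, F0 p u = v ∧ F0 p v = (p:Wt p) • u ∧ V0 p u = v ∧ V0 p v = (p:Wt p) • u ∧
    L = Submodule.span (Wt p) {u, v} ∧ LinearIndependent (Wt p) ![u, v]

lemma concl_top : Concl p ⊤ := by
  refine ⟨(1,0), (0,1), ?_, ?_, ?_, ?_, ?_, ?_⟩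
  · simp [F0, Prod.ext_iff]
  · simp [F0, Prod.ext_iff, sigma_p]
  · simp [V0, Prod.ext_iff]
  · simp [V0, Prod.ext_iff, sigma_symm_p]
  · apply le_antisymm
    · intro m _
      rw [Submodule.mem_span_pair]
      exact ⟨m.1, m.2, by simp [Prod.ext_iff]⟩
    · exact le_top
  · rw [LinearIndependent.pair_iff]
    intro s t hst
    simpa [Prod.ext_iff] using hst

lemma concl_B : Concl p (Submodule.span (Wt p) {((0:Wt p),(1:Wt p)), ((p:Wt p),(0:Wt p))}) := by
  refine ⟨((0:Wt p),(1:Wt p)), ((p:Wt p),(0:Wt p)), ?_, ?_, ?_, ?_, rfl, ?_⟩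
  · simp [F0, Prod.ext_iff, sigma_p]
  · simp [F0, Prod.ext_iff, sigma_p]
  · simp [V0, Prod.ext_iff, sigma_symm_p]
  · simp [V0, Prod.ext_iff, sigma_symm_p]
  · rw [LinearIndependent.pair_iff]
    intro s t hst
    simp only [Prod.smul_def, smul_eq_mul, Prod.mk_add_mk, mul_zero, mul_one, add_zero, zero_add,
      Prod.ext_iff, Prod.fst_zero, Prod.snd_zero] at hst
    obtain ⟨h1, h2⟩ := hst
    have hpne : (p : Wt p) ≠ 0 := WittVector.p_nonzero p _
    exact ⟨h2, by
      rcases mul_eq_zero.mp h1 with h | h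
      · exact h
      · exact absurd h hpne⟩

lemma concl_smul (L : Submodule (Wt p) (D0 p)) (h : Concl p L)
    (L' : Submodule (Wt p) (D0 p))
    (hL' : ∀ m : D0 p, m ∈ L' ↔ ∃ m' ∈ L, m = (p:Wt p) • m') : Concl p L' := by
  obtain ⟨u, v, h1, h2, h3, h4, h5, h6⟩ := h
  have hpne : (p : Wt p) ≠ 0 := WittVector.p_nonzero p _
  refine ⟨(p:Wt p) • u, (p:Wt p) • v, ?_, ?_, ?_, ?_, ?_, ?_⟩
  · rw [F0_smul, sigma_p, h1]
  · rw [F0_smul, sigma_p, h2, smul_comm]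
  · rw [V0_smul, sigma_symm_p, h3]
  · rw [V0_smul, sigma_symm_p, h4, smul_comm]
  · apply le_antisymm
    · intro m hm
      obtain ⟨m', hm', rfl⟩ := (hL' m).mp hm
      rw [h5] at hm'
      rw [Submodule.mem_span_pair] at hm' ⊢
      obtain ⟨c, d, hcd⟩ := hm'
      exact ⟨c, d, by rw [← hcd]; rw [smul_add, smul_comm c, smul_comm d]⟩
    · rw [Submodule.span_le]
      rintro m hm
      rcases hm with h | h
      · rw [h]
        show _ ∈ L'
        rw [hL']
        exact ⟨u, by rw [h5]; exact Submodule.subset_span (by left; rfl), rfl⟩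
      · rw [Set.mem_singleton_iff] at h
        rw [h]
        show _ ∈ L'
        rw [hL']
        exact ⟨v, by rw [h5]; exact Submodule.subset_span (by right; rfl), rfl⟩
  · rw [LinearIndependent.pair_iff] at h6 ⊢
    intro s t hst
    have : (s * p) • u + (t * p) • v = 0 := by
      rw [mul_smul, mul_smul]
      exact hst
    obtain ⟨hs, ht⟩ := h6 _ _ this
    exact ⟨by rcases mul_eq_zero.mp hs with h | h; exact h; exact absurd h hpne,
      by rcases mul_eq_zero.mp ht with h | h; exact h; exact absurd h hpne⟩

end St2

namespace St2
variable (p : ℕ) [Fact p.Prime]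

lemma chain (n : ℕ) : ∀ (L : Submodule (Wt p) (D0 p)),
    (∀ m ∈ L, F0 p m ∈ L) → (∀ m : D0 p, (p:Wt p)^n • m ∈ L) → Concl p L := by
  induction n with
  | zero =>
    intro L hF hp0
    have htop : L = ⊤ := by
      rw [eq_top_iff]
      intro m _
      simpa using hp0 m
    rw [htop]
    exact concl_top p
  | succ n ih =>
    intro L hF hpn
    by_cases hA : ∃ a ∈ L, IsUnit (a.1 : Wt p)
    · obtain ⟨a, ha, h1⟩ := hA
      rw [caseA p L hF a ha h1]
      exact concl_top p
    · push_neg at hA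
      by_cases hB : ∃ a ∈ L, IsUnit (a.2 : Wt p)
      · obtain ⟨a, ha, h2⟩ := hB
        rw [caseB p L hF hA a ha h2]
        exact concl_B p
      · push_neg at hB
        -- case C : everything divisible by p
        set L' : Submodule (Wt p) (D0 p) :=
          Submodule.comap ((p:Wt p) • (LinearMap.id : D0 p →ₗ[Wt p] D0 p)) L with hL'def
        have hmemL' : ∀ m : D0 p, m ∈ L' ↔ (p:Wt p) • m ∈ L := by
          intro m
          rw [hL'def]
          simp [Submodule.mem_comap]
        have hF' : ∀ m ∈ L', F0 p m ∈ L' := by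
          intro m hm
          rw [hmemL'] at hm ⊢
          have : (p:Wt p) • F0 p m = F0 p ((p:Wt p) • m) := by
            rw [F0_smul, sigma_p]
          rw [this]
          exact hF _ hm
        have hpn' : ∀ m : D0 p, (p:Wt p)^n • m ∈ L' := by
          intro m
          rw [hmemL']
          have : (p:Wt p) • (p:Wt p)^n • m = (p:Wt p)^(n+1) • m := by
            rw [← mul_smul, ← pow_succ']
          rw [this]
          exact hpn m
        have hL'L : ∀ m : D0 p, m ∈ L ↔ ∃ m' ∈ L', m = (p:Wt p) • m' := by
          intro m
          constructor
          · intro hm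
            obtain ⟨x1, hx1⟩ := (isUnit_or_dvd p m.1).resolve_left (fun h => hA m hm h)
            obtain ⟨x2, hx2⟩ := (isUnit_or_dvd p m.2).resolve_left (fun h => hB m hm h)
            refine ⟨(x1, x2), ?_, ?_⟩
            · rw [hmemL']
              have : (p:Wt p) • ((x1, x2) : D0 p) = m := by
                simp [Prod.ext_iff, hx1, hx2]
              rw [this]
              exact hm
            · simp [Prod.ext_iff, hx1, hx2]
          · rintro ⟨m', hm', rfl⟩
            rw [hmemL'] at hm'
            exact hm'
        exact concl_smul p L' (ih L' hF' hpn') L hL'L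

end St2

namespace St2
variable (p : ℕ) [Fact p.Prime]





lemma sigma_p' : σW p (p : Wt p) = (p : Wt p) := map_natCast _ p
lemma sigma_symm_p' : (σW p).symm (p : Wt p) = (p : Wt p) := map_natCast _ p

lemma F0_zero : F0 p 0 = 0 := by simp [F0, Prod.ext_iff]
lemma V0_zero : V0 p 0 = 0 := by simp [V0, Prod.ext_iff]

lemma F0_inj : Function.Injective (F0 p) := by
  intro m m' h
  simp only [F0, Prod.ext_iff] at h
  obtain ⟨h1, h2⟩ := h
  have hpne : (p : Wt p) ≠ 0 := WittVector.p_nonzero p _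
  have e2 : m.2 = m'.2 := (σW p).injective (mul_left_cancel₀ hpne h1)
  have e1 : m.1 = m'.1 := (σW p).injective h2
  exact Prod.ext e1 e2

lemma F2_inj : Function.Injective (F2 p) := by
  intro m m' h
  have h1 : F0 p m.1 = F0 p m'.1 := congrArg Prod.fst h
  have h2 : F0 p m.2 = F0 p m'.2 := congrArg Prod.snd h
  exact Prod.ext (F0_inj p h1) (F0_inj p h2)

end St2

open St2

/-- an isogeny `φ : (D,F,V) → D₀ ⊕ D₀` of Dieudonné modules, with `D` free of
rank 4, forces the existence of a basis `e₁ = b 0, f₁ = b 1, e₂ = b 2, f₂ = b 3` of `D` in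
which `F` and `V` take the standard shape for some `x ∈ W`, with
`φ(We₁ + Wf₁) ⊆ We₁′ + Wf₁′`. -/
theorem statement2 (p : ℕ) [Fact p.Prime] (hp : Odd p)
    (D : Type*) [AddCommGroup D] [Module (Wt p) D]
    [Module.Free (Wt p) D] [Module.Finite (Wt p) D]
    (hD : Module.finrank (Wt p) D = 4)
    (F V : D → D)
    (hFadd : ∀ m n : D, F (m + n) = F m + F n)
    (hFsemi : ∀ (a : Wt p) (m : D), F (a • m) = σW p a • F m)
    (hVadd : ∀ m n : D, V (m + n) = V m + V n)
    (hVsemi : ∀ (a : Wt p) (m : D), V (a • m) = (σW p).symm a • V m)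
    (hFV : ∀ m : D, F (V m) = (p : Wt p) • m)
    (hVF : ∀ m : D, V (F m) = (p : Wt p) • m)
    (φ : D →ₗ[Wt p] D2 p)
    (hφinj : Function.Injective φ)
    (hφF : ∀ m : D, φ (F m) = F2 p (φ m))
    (hφV : ∀ m : D, φ (V m) = V2 p (φ m))
    (hφcoker : ∃ n : ℕ, ∀ d : D2 p, (p : Wt p) ^ n • d ∈ LinearMap.range φ)
    :
    ∃ (x : Wt p) (b : Module.Basis (Fin 4) (Wt p) D),
      F (b 0) = b 1 ∧ F (b 1) = (p : Wt p) • b 0 ∧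
      F (b 2) = b 3 ∧ F (b 3) = (p : Wt p) • b 2 + x • b 1 ∧
      V (b 0) = b 1 ∧ V (b 1) = (p : Wt p) • b 0 ∧
      V (b 2) = b 3 - (σW p).symm x • b 0 ∧ V (b 3) = (p : Wt p) • b 2 ∧
      Submodule.map φ (Submodule.span (Wt p) {b 0, b 1})
        ≤ Submodule.span (Wt p)
            {(((1 : Wt p), (0 : Wt p)), ((0 : Wt p), (0 : Wt p))),
             (((0 : Wt p), (1 : Wt p)), ((0 : Wt p), (0 : Wt p)))} := by
  classical
  obtain ⟨n, hn⟩ := hφcoker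
  -- basic consequences for F
  have hF0 : F 0 = 0 := by
    have h1 := hFadd 0 0
    rw [add_zero] at h1
    have h2 : F 0 + F 0 = F 0 + 0 := by rw [add_zero]; exact h1.symm
    exact add_left_cancel h2
  have hFneg : ∀ m : D, F (-m) = - F m := by
    intro m
    have h1 := hFadd m (-m)
    rw [add_neg_cancel, hF0] at h1
    exact eq_neg_of_add_eq_zero_right h1.symm
  have hFsub : ∀ m m' : D, F (m - m') = F m - F m' := by
    intro m m'
    rw [sub_eq_add_neg, hFadd, hFneg, sub_eq_add_neg]
  have hFinj : Function.Injective F := by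
    intro m m' h
    have h2 : φ (F (m - m')) = 0 := by
      rw [hFsub, h, sub_self, map_zero]
    rw [hφF] at h2
    have h3 : F2 p (φ (m - m')) = F2 p 0 := by
      rw [h2]
      show _ = F2 p (0, 0)
      simp [F2, St2.F0_zero]
      rfl
    have h4 := F2_inj p h3
    have h5 : φ (m - m') = φ 0 := by rw [h4, map_zero]
    have := hφinj h5
    rwa [sub_eq_zero] at this
  -- the submodule LA of D0 : x such that (x,0) ∈ range φ
  set LA : Submodule (Wt p) (D0 p) :=
    Submodule.comap (LinearMap.inl (Wt p) (D0 p) (D0 p)) (LinearMap.range φ) with hLAdef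
  have hmemLA : ∀ x : D0 p, x ∈ LA ↔ ∃ a : D, φ a = (x, 0) := by
    intro x
    rw [hLAdef]
    simp only [Submodule.mem_comap, LinearMap.mem_range, LinearMap.inl_apply]
  have hLAF : ∀ m ∈ LA, F0 p m ∈ LA := by
    intro x hx
    rw [hmemLA] at hx ⊢
    obtain ⟨a, ha⟩ := hx
    refine ⟨F a, ?_⟩
    rw [hφF, ha]
    show (F0 p x, F0 p (0:D0 p)) = _
    rw [St2.F0_zero]
  have hLApn : ∀ m : D0 p, (p:Wt p)^n • m ∈ LA := by
    intro x
    rw [hmemLA]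
    obtain ⟨a, ha⟩ := hn ((x, 0) : D2 p)
    refine ⟨a, ?_⟩
    rw [ha, Prod.smul_mk, smul_zero]
  obtain ⟨u, v, hau1, hau2, hau3, hau4, hau5, hau6⟩ := St2.chain p n LA hLAF hLApn
  have hu : u ∈ LA := by rw [hau5]; exact Submodule.subset_span (by left; rfl)
  have hv : v ∈ LA := by rw [hau5]; exact Submodule.subset_span (by right; rfl)
  obtain ⟨b0, hb0⟩ := (hmemLA u).mp hu
  obtain ⟨b1, hb1⟩ := (hmemLA v).mp hv
  -- relations for b0 b1
  have hphiF : ∀ (a : D) (x : D0 p), φ a = (x, 0) → φ (F a) = (F0 p x, 0) := by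
    intro a x ha
    rw [hφF, ha]
    show (F0 p x, F0 p (0:D0 p)) = _
    rw [St2.F0_zero]
  have hphiV : ∀ (a : D) (x : D0 p), φ a = (x, 0) → φ (V a) = (V0 p x, 0) := by
    intro a x ha
    rw [hφV, ha]
    show (V0 p x, V0 p (0:D0 p)) = _
    rw [St2.V0_zero]
  have hFb0 : F b0 = b1 := by
    apply hφinj
    rw [hphiF b0 u hb0, hau1, hb1]
  have hFb1 : F b1 = (p:Wt p) • b0 := by
    apply hφinj
    rw [hphiF b1 v hb1, hau2, map_smul, hb0]
    simp [Prod.ext_iff]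
  have hVb0 : V b0 = b1 := by
    apply hφinj
    rw [hphiV b0 u hb0, hau3, hb1]
  have hVb1 : V b1 = (p:Wt p) • b0 := by
    apply hφinj
    rw [hphiV b1 v hb1, hau4, map_smul, hb0]
    simp [Prod.ext_iff]
  -- second projection
  set ψ : D →ₗ[Wt p] D0 p := (LinearMap.snd (Wt p) (D0 p) (D0 p)).comp φ with hψdef
  have hψ : ∀ d : D, ψ d = (φ d).2 := fun d => rfl
  have hψF : ∀ d : D, ψ (F d) = F0 p (ψ d) := by
    intro d
    rw [hψ, hψ, hφF]
    rfl
  -- kernel of ψ is span {b0, b1}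
  have hb0A : ψ b0 = 0 := by rw [hψ, hb0]
  have hb1A : ψ b1 = 0 := by rw [hψ, hb1]
  have hker : ∀ d : D, ψ d = 0 → ∃ c e : Wt p, d = c • b0 + e • b1 := by
    intro d hd
    have h1 : φ d = ((φ d).1, 0) := by
      rw [hψ] at hd
      exact Prod.ext rfl hd
    have h2 : (φ d).1 ∈ LA := by
      rw [hmemLA]
      exact ⟨d, h1⟩
    rw [hau5, Submodule.mem_span_pair] at h2
    obtain ⟨c, e, hce⟩ := h2
    refine ⟨c, e, hφinj ?_⟩
    rw [map_add, map_smul, map_smul, hb0, hb1, h1]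
    rw [Prod.ext_iff]
    constructor
    · exact hce.symm
    · simp
  -- the image LB of ψ
  set LB : Submodule (Wt p) (D0 p) := LinearMap.range ψ with hLBdef
  have hLBF : ∀ m ∈ LB, F0 p m ∈ LB := by
    rintro x ⟨d, rfl⟩
    exact ⟨F d, hψF d⟩
  have hLBpn : ∀ m : D0 p, (p:Wt p)^n • m ∈ LB := by
    intro x
    obtain ⟨a, ha⟩ := hn ((0, x) : D2 p)
    refine ⟨a, ?_⟩
    rw [hψ, ha]
    show ((p:Wt p)^n • (0, x) : D2 p).2 = _
    rfl
  obtain ⟨u', v', hbu1, hbu2, hbu3, hbu4, hbu5, hbu6⟩ := St2.chain p n LB hLBF hLBpn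
  have hu' : u' ∈ LB := by rw [hbu5]; exact Submodule.subset_span (by left; rfl)
  obtain ⟨c2, hc2⟩ := hu'
  set c3 : D := F c2 with hc3def
  have hc3 : ψ c3 = v' := by rw [hc3def, hψF, hc2, hbu1]
  -- the four elements span D
  have hspan : ∀ d : D, ∃ a0 a1 a2 a3 : Wt p,
      d = a0 • b0 + a1 • b1 + a2 • c2 + a3 • c3 := by
    intro d
    have h1 : ψ d ∈ LB := ⟨d, rfl⟩
    rw [hbu5, Submodule.mem_span_pair] at h1
    obtain ⟨c, e, hce⟩ := h1
    have h2 : ψ (d - (c • c2 + e • c3)) = 0 := by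
      rw [map_sub, map_add, map_smul, map_smul, hc2, hc3, ← hce, sub_self]
    obtain ⟨a0, a1, h3⟩ := hker _ h2
    refine ⟨a0, a1, c, e, ?_⟩
    have := congrArg (fun z => z + (c • c2 + e • c3)) h3
    simp only [sub_add_cancel] at this
    rw [this]
    abel
  -- linear independence of the four elements
  have hindep : ∀ a0 a1 a2 a3 : Wt p,
      a0 • b0 + a1 • b1 + a2 • c2 + a3 • c3 = 0 → a0 = 0 ∧ a1 = 0 ∧ a2 = 0 ∧ a3 = 0 := by
    intro a0 a1 a2 a3 h
    have h1 : a2 • u' + a3 • v' = 0 := by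
      have := congrArg ψ h
      rw [map_add, map_add, map_add, map_smul, map_smul, map_smul, map_smul,
        hb0A, hb1A, hc2, hc3, smul_zero, smul_zero, map_zero] at this
      rw [← this]
      abel
    obtain ⟨h2, h3⟩ := (LinearIndependent.pair_iff.mp hbu6) a2 a3 h1
    rw [h2, h3, zero_smul, zero_smul, add_zero, add_zero] at h
    have h4 : a0 • u + a1 • v = 0 := by
      have := congrArg φ h
      rw [map_add, map_smul, map_smul, hb0, hb1, map_zero] at this
      simpa using congrArg Prod.fst this
    obtain ⟨h6, h7⟩ := (LinearIndependent.pair_iff.mp hau6) a0 a1 h4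
    exact ⟨h6, h7, h2, h3⟩
  -- decompose F c3
  have hFc3A : ψ (F c3 - (p:Wt p) • c2) = 0 := by
    rw [map_sub, map_smul, hψF, hc3, hbu2, hc2, sub_self]
  obtain ⟨α, β, hαβ⟩ := hker _ hFc3A
  have hFc3 : F c3 = (p:Wt p) • c2 + α • b0 + β • b1 := by
    have := congrArg (fun z => z + (p:Wt p) • c2) hαβ
    simp only [sub_add_cancel] at this
    rw [this]; abel
  -- p divides α
  obtain ⟨a0, a1, a2, a3, hVc2⟩ := hspan (V c2)
  have e2 : V (F c3) = (p:Wt p) • (V c2) + ((σW p).symm α) • b1 + ((σW p).symm β * (p:Wt p)) • b0 := by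
    rw [hFc3, hVadd, hVadd, hVsemi, hVsemi, hVsemi, hVb0, hVb1, sigma_symm_p']
    rw [smul_smul]
  have e3 : (p:Wt p) • (a0 • b0 + a1 • b1 + a2 • c2 + a3 • c3)
      + ((σW p).symm α) • b1 + ((σW p).symm β * (p:Wt p)) • b0 = (p:Wt p) • c3 := by
    rw [← hVc2, ← e2, hVF]
  have key : ((p:Wt p)*a0 + (σW p).symm β * (p:Wt p)) • b0 + ((p:Wt p)*a1 + (σW p).symm α) • b1
      + ((p:Wt p)*a2) • c2 + ((p:Wt p)*a3 - (p:Wt p)) • c3 = 0 := by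
    linear_combination (norm := module) e3
  have hα1 : (p:Wt p)*a1 + (σW p).symm α = 0 := (hindep _ _ _ _ key).2.1
  have hα : α = (p:Wt p) * (-(σW p a1)) := by
    have h1 : (σW p).symm α = -((p:Wt p) * a1) := by linear_combination hα1
    have := congrArg (σW p) h1
    rw [(σW p).apply_symm_apply, map_neg, map_mul, sigma_p'] at this
    rw [this]; ring
  -- solve for s
  obtain ⟨s, hs⟩ := St2.surj_one_sub_sigma_sq p (-(σW p a1))
  set b2 : D := c2 + s • b0 with hb2def
  set b3 : D := c3 + (σW p s) • b1 with hb3def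
  have hFb2 : F b2 = b3 := by
    rw [hb2def, hFadd, hFsemi, hFb0, hb3def, hc3def]
  have hsc : α + (p:Wt p) * (σW p (σW p s)) = (p:Wt p) * s := by
    rw [hα]; linear_combination -(p:Wt p) * hs
  have hFb3 : F b3 = (p:Wt p) • b2 + β • b1 := by
    rw [hb3def, hFadd, hFsemi, hFb1, hFc3, hb2def]
    rw [smul_comm (σW p (σW p s)) (p:Wt p) b0]
    linear_combination (norm := module) hsc • b0
  have hVb3 : V b3 = (p:Wt p) • b2 := by
    rw [← hFb2, hVF]
  have hVb2 : V b2 = b3 - ((σW p).symm β) • b0 := by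
    apply hFinj
    rw [hFV, hFsub, hFsemi, (σW p).apply_symm_apply, hFb0, hFb3]
    abel
  -- new spanning family
  set g : Fin 4 → D := ![b0, b1, b2, b3] with hgdef
  have hg0 : g 0 = b0 := rfl
  have hg1 : g 1 = b1 := rfl
  have hg2 : g 2 = b2 := rfl
  have hg3 : g 3 = b3 := rfl
  have hspan' : ∀ d : D, ∃ e0 e1 e2 e3 : Wt p,
      d = e0 • b0 + e1 • b1 + e2 • b2 + e3 • b3 := by
    intro d
    obtain ⟨a0', a1', a2', a3', h⟩ := hspan d
    refine ⟨a0' - a2' * s, a1' - a3' * σW p s, a2', a3', ?_⟩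
    rw [h, hb2def, hb3def]
    module
  have hindep' : ∀ e0 e1 e2 e3 : Wt p,
      e0 • b0 + e1 • b1 + e2 • b2 + e3 • b3 = 0 → e0 = 0 ∧ e1 = 0 ∧ e2 = 0 ∧ e3 = 0 := by
    intro e0 e1 e2 e3 h
    have h2 : (e0 + e2 * s) • b0 + (e1 + e3 * σW p s) • b1 + e2 • c2 + e3 • c3 = 0 := by
      rw [← h, hb2def, hb3def]
      module
    obtain ⟨k0, k1, k2, k3⟩ := hindep _ _ _ _ h2
    rw [k2] at k0
    rw [k3] at k1
    simp only [zero_mul, add_zero] at k0 k1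
    exact ⟨k0, k1, k2, k3⟩
  have hgindep : LinearIndependent (Wt p) g := by
    rw [Fintype.linearIndependent_iff]
    intro c hc
    rw [Fin.sum_univ_four] at hc
    rw [hg0, hg1, hg2, hg3] at hc
    obtain ⟨k0, k1, k2, k3⟩ := hindep' _ _ _ _ hc
    intro i
    fin_cases i
    · exact k0
    · exact k1
    · exact k2
    · exact k3
  have hgspan : ⊤ ≤ Submodule.span (Wt p) (Set.range g) := by
    intro d _
    obtain ⟨e0, e1, e2, e3, h⟩ := hspan' d
    rw [h]
    have m0 : b0 ∈ Set.range g := ⟨0, hg0⟩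
    have m1 : b1 ∈ Set.range g := ⟨1, hg1⟩
    have m2 : b2 ∈ Set.range g := ⟨2, hg2⟩
    have m3 : b3 ∈ Set.range g := ⟨3, hg3⟩
    exact add_mem (add_mem (add_mem
      (Submodule.smul_mem _ _ (Submodule.subset_span m0))
      (Submodule.smul_mem _ _ (Submodule.subset_span m1)))
      (Submodule.smul_mem _ _ (Submodule.subset_span m2)))
      (Submodule.smul_mem _ _ (Submodule.subset_span m3))
  set B : Module.Basis (Fin 4) (Wt p) D := Module.Basis.mk hgindep hgspan with hBdef
  have hB0 : B 0 = b0 := by rw [hBdef, Module.Basis.mk_apply, hg0]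
  have hB1 : B 1 = b1 := by rw [hBdef, Module.Basis.mk_apply, hg1]
  have hB2 : B 2 = b2 := by rw [hBdef, Module.Basis.mk_apply, hg2]
  have hB3 : B 3 = b3 := by rw [hBdef, Module.Basis.mk_apply, hg3]
  refine ⟨β, B, ?_, ?_, ?_, ?_, ?_, ?_, ?_, ?_, ?_⟩
  · rw [hB0, hB1, hFb0]
  · rw [hB0, hB1, hFb1]
  · rw [hB2, hB3, hFb2]
  · rw [hB2, hB3, hB1, hFb3]
  · rw [hB0, hB1, hVb0]
  · rw [hB0, hB1, hVb1]
  · rw [hB2, hB3, hB0, hVb2]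
  · rw [hB2, hB3, hVb3]
  · rw [hB0, hB1]
    rw [Submodule.map_span, Set.image_pair]
    rw [Submodule.span_le]
    rintro z hz
    rcases hz with h | h
    · rw [h, hb0]
      rw [SetLike.mem_coe, Submodule.mem_span_pair]
      refine ⟨u.1, u.2, ?_⟩
      simp [Prod.ext_iff]
    · rw [Set.mem_singleton_iff] at h
      rw [h, hb1]
      rw [SetLike.mem_coe, Submodule.mem_span_pair]
      refine ⟨v.1, v.2, ?_⟩
      simp [Prod.ext_iff]
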